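/- For all sufficiently large c > 0 there exist constants 0 < D₁ < d₁ < d₂ < D₂ < 1, M > 0 and T > 0 such that for every bounded classical solution (u,v) of the system ∂u/∂t = Δu + (2c(1−u)+1)v − u, ∂v/∂t = Δv + (c(u−v)−2)v on [0,∞)×ℝ taking values in ℛ = {(u,v) ∈ ℝ² : 0 ≤ v ≤ u ≤ 1}: if v(0,x) ∈ (D₁, D₂) for all x ∈ [−M, M], then v(T,x) ∈ (d₁, d₂) for all x ∈ [−3M, 3M]. -/

import Mathlib

open Set

/-- `ℛ = {(u,v) ∈ ℝ² : 0 ≤ v ≤ u ≤ 1}`. -/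
def calR : Set (ℝ × ℝ) := {p | 0 ≤ p.2 ∧ p.2 ≤ p.1 ∧ p.1 ≤ 1}

/-- A bounded classical solution on `[0,∞) × ℝ` of
`∂u/∂t = Δu + (2c(1−u)+1)v − u`, `∂v/∂t = Δv + (c(u−v)−2)v`:
both functions bounded, continuous on `[0,∞) × ℝ`, C¹ in `t` and C² in `x`
for `t > 0`, satisfying the system pointwise for `t > 0`. -/
structure IsBddSol1 (c : ℝ) (u v : ℝ → ℝ → ℝ) : Prop where
  bdd_u : ∃ C, ∀ t x, |u t x| ≤ C
  bdd_v : ∃ C, ∀ t x, |v t x| ≤ C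
  cont_u : ContinuousOn (fun p : ℝ × ℝ => u p.1 p.2) (Ici 0 ×ˢ univ)
  cont_v : ContinuousOn (fun p : ℝ × ℝ => v p.1 p.2) (Ici 0 ×ˢ univ)
  t_reg_u : ∀ x, ContDiffOn ℝ 1 (fun τ => u τ x) (Ioi 0)
  t_reg_v : ∀ x, ContDiffOn ℝ 1 (fun τ => v τ x) (Ioi 0)
  x_reg_u : ∀ t, 0 < t → ContDiff ℝ 2 (fun x => u t x)
  x_reg_v : ∀ t, 0 < t → ContDiff ℝ 2 (fun x => v t x)
  eq_u : ∀ t, 0 < t → ∀ x,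
    deriv (fun τ => u τ x) t
      = iteratedDeriv 2 (fun y => u t y) x + (2 * c * (1 - u t x) + 1) * v t x - u t x
  eq_v : ∀ t, 0 < t → ∀ x,
    deriv (fun τ => v τ x) t
      = iteratedDeriv 2 (fun y => v t y) x + (c * (u t x - v t x) - 2) * v t x

open Filter Real
set_option linter.unusedVariables false
set_option linter.unreachableTactic false
set_option linter.unusedTactic false
set_option maxHeartbeats 1000000


lemma derivA {f : ℝ → ℝ} {a t : ℝ} (hat : a < t) (hd : DifferentiableAt ℝ f t)
    (hmax : ∀ s ∈ Set.Icc a t, f s ≤ f t) : 0 ≤ deriv f t := by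
  have h := hd.hasDerivAt
  rw [hasDerivAt_iff_tendsto_slope] at h
  have hsub : Iio t ⊆ {t}ᶜ := fun y hy => ne_of_lt hy
  have h' : Tendsto (slope f t) (nhdsWithin t (Iio t)) (nhds (deriv f t)) :=
    h.mono_left (nhdsWithin_mono _ hsub)
  refine ge_of_tendsto h' ?_
  filter_upwards [Ioo_mem_nhdsLT_of_mem (Set.mem_Ioc.2 ⟨hat, le_refl t⟩)] with s hs
  rw [slope_def_field]
  have h1 : f s - f t ≤ 0 := sub_nonpos.2 (hmax s ⟨hs.1.le, hs.2.le⟩)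
  have h2 : s - t < 0 := sub_neg.2 hs.2
  exact div_nonneg_iff.2 (Or.inr ⟨h1, h2.le⟩)

lemma derivB {g : ℝ → ℝ} {x : ℝ} (hg : ContDiff ℝ 2 g) (hmax : IsLocalMax g x) :
    iteratedDeriv 2 g x ≤ 0 := by
  have hg' : Differentiable ℝ g := hg.differentiable (by norm_num)
  have hdg : ContDiff ℝ 1 (deriv g) := by
    have := (contDiff_succ_iff_deriv (n := 1)).1 (by exact_mod_cast hg)
    exact this.2.2
  have hdg' : Differentiable ℝ (deriv g) := hdg.differentiable one_ne_zero
  rw [show (2:ℕ) = 1 + 1 from rfl, iteratedDeriv_succ, iteratedDeriv_one]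
  by_contra hcon
  push_neg at hcon
  obtain ⟨δ, hδpos, hball⟩ := Metric.eventually_nhds_iff.1 hmax
  have hfreq : ∃ᶠ y in nhdsWithin x (Ioi x), deriv g y ≤ 0 := by
    rw [Filter.frequently_iff]
    intro U hU
    obtain ⟨u, hu, hsub⟩ := mem_nhdsGT_iff_exists_Ioo_subset.1 hU
    set y := min u (x + δ/2) with hy
    have hxy : x < y := lt_min hu (by linarith)
    obtain ⟨ξ, hξ, hslope⟩ := exists_deriv_eq_slope g hxy (hg'.continuous.continuousOn)
      (hg'.differentiableOn)
    refine ⟨ξ, hsub ⟨hξ.1, lt_of_lt_of_le hξ.2 (min_le_left _ _)⟩, ?_⟩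
    rw [hslope]
    have hgy : g y ≤ g x := by
      apply hball
      rw [Real.dist_eq, abs_lt]
      have := min_le_right u (x+δ/2)
      constructor <;> linarith
    have : y - x > 0 := by linarith
    apply div_nonpos_of_nonpos_of_nonneg <;> linarith
  have h0 : deriv g x = 0 := hmax.deriv_eq_zero
  have h := (hdg' x).hasDerivAt
  rw [hasDerivAt_iff_tendsto_slope] at h
  have h' : Tendsto (slope (deriv g) x) (nhdsWithin x (Ioi x)) (nhds (deriv (deriv g) x)) :=
    h.mono_left (nhdsWithin_mono _ (fun y hy => ne_of_gt hy))
  have hev : ∀ᶠ y in nhdsWithin x (Ioi x), 0 < slope (deriv g) x y ∧ y ∈ Ioi x :=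
    (h'.eventually (eventually_gt_nhds hcon |>.mono (fun z hz => hz)) |>.and self_mem_nhdsWithin)
  obtain ⟨y, hy1, hy2, hy3⟩ := (hfreq.and_eventually hev).exists
  rw [slope_def_field, h0, sub_zero] at hy2
  have : 0 < deriv g y := by
    rcases div_pos_iff.1 hy2 with ⟨h, _⟩ | ⟨_, h⟩
    · exact h
    · exfalso; rw [mem_Ioi] at hy3; linarith
  linarith


lemma contDiff_two_deriv {f : ℝ → ℝ} (hf : ContDiff ℝ 2 f) : ContDiff ℝ 1 (deriv f) := by
  have := (contDiff_succ_iff_deriv (n := 1)).1 (by exact_mod_cast hf)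
  exact this.2.2

lemma iter2_eq {f : ℝ → ℝ} : iteratedDeriv 2 f = deriv (deriv f) := by
  rw [show (2:ℕ) = 1 + 1 from rfl, iteratedDeriv_succ, iteratedDeriv_one]

lemma iter2_of_hasDerivAt {f f' : ℝ → ℝ} {d x : ℝ}
    (h1 : ∀ y, HasDerivAt f (f' y) y) (h2 : HasDerivAt f' d x) :
    iteratedDeriv 2 f x = d := by
  rw [iter2_eq]
  have hdf : deriv f = f' := funext fun y => (h1 y).deriv
  rw [hdf]
  exact h2.deriv

lemma iter2_sub {f g : ℝ → ℝ} (hf : ContDiff ℝ 2 f) (hg : ContDiff ℝ 2 g) (x : ℝ) :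
    iteratedDeriv 2 (fun y => f y - g y) x = iteratedDeriv 2 f x - iteratedDeriv 2 g x := by
  rw [iter2_eq, iter2_eq, iter2_eq]
  have hf1 : Differentiable ℝ f := hf.differentiable (by norm_num)
  have hg1 : Differentiable ℝ g := hg.differentiable (by norm_num)
  have hfd : Differentiable ℝ (deriv f) := (contDiff_two_deriv hf).differentiable one_ne_zero
  have hgd : Differentiable ℝ (deriv g) := (contDiff_two_deriv hg).differentiable one_ne_zero
  have h1 : deriv (fun y => f y - g y) = fun y => deriv f y - deriv g y :=
    funext fun y => deriv_sub (hf1 y) (hg1 y)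
  rw [h1]
  exact deriv_sub (hfd x) (hgd x)


/-- Parabolic maximum principle on a rectangle. -/
lemma MP2 {a b R : ℝ} (hab : a < b) (hR : 0 < R) (z : ℝ → ℝ → ℝ)
    (hcont : ContinuousOn (fun p : ℝ × ℝ => z p.1 p.2) (Icc a b ×ˢ Icc (-R) R))
    (hdiff_t : ∀ x ∈ Icc (-R) R, ∀ t ∈ Ioc a b, DifferentiableAt ℝ (fun τ => z τ x) t)
    (hdiff_x : ∀ t ∈ Ioc a b, ContDiff ℝ 2 (z t))
    (h0 : ∀ x ∈ Icc (-R) R, z a x ≤ 0)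
    (hbl : ∀ t ∈ Icc a b, z t (-R) ≤ 0) (hbr : ∀ t ∈ Icc a b, z t R ≤ 0)
    (hineq : ∀ t ∈ Ioc a b, ∀ x ∈ Ioo (-R) R, 0 < z t x →
      deriv (fun τ => z τ x) t ≤ iteratedDeriv 2 (z t) x) :
    ∀ t ∈ Icc a b, ∀ x ∈ Icc (-R) R, z t x ≤ 0 := by
  by_contra hcon
  push_neg at hcon
  obtain ⟨t₀, ht₀, x₀, hx₀, hz₀⟩ := hcon
  set ε : ℝ := z t₀ x₀ / (2 * (b - a)) with hε
  have hba : (0:ℝ) < b - a := by linarith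
  have hεpos : 0 < ε := div_pos hz₀ (by linarith)
  set ψ : ℝ × ℝ → ℝ := fun p => z p.1 p.2 - ε * (p.1 - a) with hψ
  have hKcomp : IsCompact (Icc a b ×ˢ Icc (-R) R) := (isCompact_Icc).prod isCompact_Icc
  have hKne : (Icc a b ×ˢ Icc (-R) R).Nonempty := ⟨(t₀, x₀), ⟨ht₀, hx₀⟩⟩
  have hψcont : ContinuousOn ψ (Icc a b ×ˢ Icc (-R) R) := by
    apply hcont.sub
    fun_prop
  obtain ⟨⟨t₁, x₁⟩, hmem, hmax⟩ := hKcomp.exists_isMaxOn hKne hψcont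
  have hval : ψ (t₀, x₀) ≤ ψ (t₁, x₁) := hmax ⟨ht₀, hx₀⟩
  have hψ₀ : 0 < ψ (t₀, x₀) := by
    have h1 : ε * (t₀ - a) ≤ ε * (b - a) := by
      apply mul_le_mul_of_nonneg_left _ hεpos.le
      linarith [ht₀.2]
    have : ε * (b - a) = z t₀ x₀ / 2 := by
      rw [hε]; field_simp
    simp only [hψ]
    nlinarith [ht₀.1]
  have hψ₁ : 0 < ψ (t₁, x₁) := lt_of_lt_of_le hψ₀ hval
  have hzt₁ : 0 < z t₁ x₁ := by
    have h1 : ε * (t₁ - a) ≥ 0 := mul_nonneg hεpos.le (by linarith [hmem.1.1])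
    simp only [hψ] at hψ₁
    linarith
  have ht₁a : t₁ ≠ a := by
    intro h
    rw [h] at hzt₁
    exact absurd (h0 x₁ hmem.2) (not_le.2 hzt₁)
  have ht₁' : t₁ ∈ Ioc a b := ⟨lt_of_le_of_ne hmem.1.1 (Ne.symm ht₁a), hmem.1.2⟩
  have hx₁l : x₁ ≠ -R := fun h => absurd (hbl t₁ hmem.1) (by rw [← h]; exact not_le.2 hzt₁)
  have hx₁r : x₁ ≠ R := fun h => absurd (hbr t₁ hmem.1) (by rw [← h]; exact not_le.2 hzt₁)
  have hx₁' : x₁ ∈ Ioo (-R) R :=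
    ⟨lt_of_le_of_ne hmem.2.1 (Ne.symm hx₁l), lt_of_le_of_ne hmem.2.2 hx₁r⟩
  -- time derivative ≥ ε
  have hdA : 0 ≤ deriv (fun τ => z τ x₁ - ε * (τ - a)) t₁ := by
    apply derivA ht₁'.1
    · exact ((hdiff_t x₁ hmem.2 t₁ ht₁').sub (by fun_prop))
    · intro s hs
      have hm : ψ (s, x₁) ≤ ψ (t₁, x₁) :=
        hmax ⟨⟨hs.1, le_trans hs.2 hmem.1.2⟩, hmem.2⟩
      simpa [hψ] using hm
  have hdt : ε ≤ deriv (fun τ => z τ x₁) t₁ := by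
    have hdz := hdiff_t x₁ hmem.2 t₁ ht₁'
    have hde : deriv (fun τ => z τ x₁ - ε * (τ - a)) t₁
        = deriv (fun τ => z τ x₁) t₁ - ε := by
      rw [deriv_fun_sub hdz (by fun_prop)]
      simp [deriv_const_mul, mul_comm]
    rw [hde] at hdA
    linarith
  -- space second derivative ≤ 0
  have hdB : iteratedDeriv 2 (z t₁) x₁ ≤ 0 := by
    apply derivB (hdiff_x t₁ ht₁')
    have hnb : Icc (-R) R ∈ nhds x₁ := Icc_mem_nhds hx₁'.1 hx₁'.2
    apply Filter.eventually_of_mem hnb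
    intro y hy
    have hm : ψ (t₁, y) ≤ ψ (t₁, x₁) := hmax ⟨hmem.1, hy⟩
    simpa [hψ] using hm
  have := hineq t₁ ht₁' x₁ hx₁' hzt₁
  linarith


/-- Parabolic maximum principle on an unbounded strip `[0,b] × ℝ`, for bounded `z`. -/
lemma MP1 {b C : ℝ} (hb : 0 < b) (z : ℝ → ℝ → ℝ)
    (hcont : ContinuousOn (fun p : ℝ × ℝ => z p.1 p.2) (Icc 0 b ×ˢ univ))
    (hbdd : ∀ t ∈ Icc 0 b, ∀ x : ℝ, z t x ≤ C)
    (hdiff_t : ∀ x : ℝ, ∀ t ∈ Ioc 0 b, DifferentiableAt ℝ (fun τ => z τ x) t)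
    (hdiff_x : ∀ t ∈ Ioc 0 b, ContDiff ℝ 2 (z t))
    (h0 : ∀ x : ℝ, z 0 x ≤ 0)
    (hineq : ∀ t ∈ Ioc 0 b, ∀ x : ℝ, 0 < z t x →
      deriv (fun τ => z τ x) t ≤ iteratedDeriv 2 (z t) x) :
    ∀ t ∈ Icc 0 b, ∀ x : ℝ, z t x ≤ 0 := by
  by_contra hcon
  push_neg at hcon
  obtain ⟨t₀, ht₀, x₀, hz₀⟩ := hcon
  have hC : 0 < C := lt_of_lt_of_le hz₀ (hbdd t₀ ht₀ x₀)
  set ε : ℝ := z t₀ x₀ / (2 * (1 + x₀ ^ 2 + 3 * b)) with hε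
  have hd : (0:ℝ) < 1 + x₀ ^ 2 + 3 * b := by positivity
  have hεpos : 0 < ε := div_pos hz₀ (by positivity)
  set R : ℝ := |x₀| + Real.sqrt (C / ε) + 1 with hR
  have hRpos : 0 < R := by positivity
  have hx₀R : x₀ ∈ Icc (-R) R := by
    have h1 := abs_nonneg x₀
    have h2 := Real.sqrt_nonneg (C / ε)
    have := le_abs_self x₀; have := neg_abs_le x₀
    constructor <;> simp only [hR] <;> linarith
  set ψ : ℝ × ℝ → ℝ := fun p => z p.1 p.2 - ε * (1 + p.2 ^ 2 + 3 * p.1) with hψ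
  set K := Icc 0 b ×ˢ Icc (-R) R with hK
  have hKcomp : IsCompact K := (isCompact_Icc).prod isCompact_Icc
  have hKne : K.Nonempty := ⟨(t₀, x₀), ⟨ht₀, hx₀R⟩⟩
  have hψcont : ContinuousOn ψ K := by
    apply ContinuousOn.sub
    · exact hcont.mono (by intro p hp; exact ⟨hp.1, trivial⟩)
    · fun_prop
  obtain ⟨⟨t₁, x₁⟩, hmem, hmax⟩ := hKcomp.exists_isMaxOn hKne hψcont
  have hval : ψ (t₀, x₀) ≤ ψ (t₁, x₁) := hmax ⟨ht₀, hx₀R⟩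
  have hψ₀ : 0 < ψ (t₀, x₀) := by
    simp only [hψ]
    have h1 : ε * (1 + x₀ ^ 2 + 3 * t₀) ≤ ε * (1 + x₀ ^ 2 + 3 * b) := by
      apply mul_le_mul_of_nonneg_left _ hεpos.le
      linarith [ht₀.2]
    have h2 : ε * (1 + x₀ ^ 2 + 3 * b) = z t₀ x₀ / 2 := by
      rw [hε]; field_simp
    nlinarith
  have hψ₁ : 0 < ψ (t₁, x₁) := lt_of_lt_of_le hψ₀ hval
  have hzt₁ : 0 < z t₁ x₁ := by
    have h1 : 0 ≤ ε * (1 + x₁ ^ 2 + 3 * t₁) := by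
      apply mul_nonneg hεpos.le; nlinarith [hmem.1.1]
    simp only [hψ] at hψ₁; linarith
  have ht₁a : t₁ ≠ 0 := by
    intro h
    rw [h] at hzt₁
    exact absurd (h0 x₁) (not_le.2 hzt₁)
  have ht₁' : t₁ ∈ Ioc 0 b := ⟨lt_of_le_of_ne hmem.1.1 (Ne.symm ht₁a), hmem.1.2⟩
  -- x₁ is interior: ε x₁² < C
  have hx₁' : x₁ ∈ Ioo (-R) R := by
    have h1 : ε * x₁ ^ 2 < C := by
      have := hbdd t₁ hmem.1 x₁
      simp only [hψ] at hψ₁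
      nlinarith [hmem.1.1]
    have h2 : x₁ ^ 2 < C / ε := (lt_div_iff₀ hεpos).2 (by linarith [h1, mul_comm ε (x₁^2)])
    have h3 : |x₁| < Real.sqrt (C / ε) := by
      rw [← Real.sqrt_sq_eq_abs]
      exact Real.sqrt_lt_sqrt (sq_nonneg _) h2
    have h4 := Real.sqrt_nonneg (C / ε)
    have h5 := abs_nonneg x₀
    rw [abs_lt] at h3
    constructor <;> simp only [hR] <;> linarith
  have hdA : 0 ≤ deriv (fun τ => z τ x₁ - ε * (1 + x₁ ^ 2 + 3 * τ)) t₁ := by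
    apply derivA ht₁'.1
    · exact ((hdiff_t x₁ t₁ ht₁').sub (by fun_prop))
    · intro s hs
      have hm : ψ (s, x₁) ≤ ψ (t₁, x₁) :=
        hmax ⟨⟨hs.1, le_trans hs.2 hmem.1.2⟩, hmem.2⟩
      simpa [hψ] using hm
  have hdt : 3 * ε ≤ deriv (fun τ => z τ x₁) t₁ := by
    have hdz := hdiff_t x₁ t₁ ht₁'
    have hde : deriv (fun τ => z τ x₁ - ε * (1 + x₁ ^ 2 + 3 * τ)) t₁
        = deriv (fun τ => z τ x₁) t₁ - 3 * ε := by
      rw [deriv_fun_sub hdz (by fun_prop)]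
      congr 1
      have : HasDerivAt (fun τ : ℝ => ε * (1 + x₁ ^ 2 + 3 * τ)) (3 * ε) t₁ := by
        simpa [mul_comm] using
          (((hasDerivAt_id t₁).const_mul (3:ℝ)).const_add (1 + x₁ ^ 2)).const_mul ε
      exact this.deriv
    rw [hde] at hdA
    linarith
  have hdB : iteratedDeriv 2 (z t₁) x₁ ≤ 2 * ε := by
    have key : iteratedDeriv 2 (fun y => z t₁ y - ε * (1 + y ^ 2 + 3 * t₁)) x₁ ≤ 0 := by
      apply derivB
      · exact (hdiff_x t₁ ht₁').sub (by fun_prop)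
      · have hnb : Icc (-R) R ∈ nhds x₁ := Icc_mem_nhds hx₁'.1 hx₁'.2
        apply Filter.eventually_of_mem hnb
        intro y hy
        have hm : ψ (t₁, y) ≤ ψ (t₁, x₁) := hmax ⟨hmem.1, hy⟩
        simpa [hψ] using hm
    have hq : ∀ y : ℝ, HasDerivAt (fun w : ℝ => ε * (1 + w ^ 2 + 3 * t₁)) (ε * (2 * y)) y := by
      intro y
      have h' : HasDerivAt (fun w : ℝ => 1 + w ^ 2 + 3 * t₁) (2 * y) y := by
        simpa using (((hasDerivAt_pow 2 y).const_add (1:ℝ)).add_const (3 * t₁))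
      exact h'.const_mul ε
    have hq2 : HasDerivAt (fun y : ℝ => ε * (2 * y)) (2 * ε) x₁ := by
      simpa [mul_comm, mul_assoc] using ((hasDerivAt_id x₁).const_mul (2:ℝ)).const_mul ε
    have hquad : iteratedDeriv 2 (fun w : ℝ => ε * (1 + w ^ 2 + 3 * t₁)) x₁ = 2 * ε :=
      iter2_of_hasDerivAt hq hq2
    have hsplit : iteratedDeriv 2 (fun y => z t₁ y - ε * (1 + y ^ 2 + 3 * t₁)) x₁
        = iteratedDeriv 2 (z t₁) x₁ - 2 * ε := by
      have := iter2_sub (hdiff_x t₁ ht₁') (by fun_prop : ContDiff ℝ 2 (fun w : ℝ => ε * (1 + w ^ 2 + 3 * t₁))) x₁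
      rw [this, hquad]
    linarith
  have := hineq t₁ ht₁' x₁ hzt₁
  linarith


lemma iter2_mul_const {f : ℝ → ℝ} {x k : ℝ} (hf : ContDiff ℝ 2 f) :
    iteratedDeriv 2 (fun y => f y * k) x = iteratedDeriv 2 f x * k := by
  rw [iter2_eq, iter2_eq]
  have hf1 : Differentiable ℝ f := hf.differentiable (by norm_num)
  have hfd : Differentiable ℝ (deriv f) := (contDiff_two_deriv hf).differentiable one_ne_zero
  have h1 : deriv (fun y => f y * k) = fun y => deriv f y * k :=
    funext fun y => deriv_mul_const (hf1 y) k
  rw [h1]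
  exact deriv_mul_const (hfd x) k

lemma MP2L {a b R L : ℝ} (hab : a < b) (hR : 0 < R) (z : ℝ → ℝ → ℝ)
    (hcont : ContinuousOn (fun p : ℝ × ℝ => z p.1 p.2) (Icc a b ×ˢ Icc (-R) R))
    (hdiff_t : ∀ x ∈ Icc (-R) R, ∀ t ∈ Ioc a b, DifferentiableAt ℝ (fun τ => z τ x) t)
    (hdiff_x : ∀ t ∈ Ioc a b, ContDiff ℝ 2 (z t))
    (h0 : ∀ x ∈ Icc (-R) R, z a x ≤ 0)
    (hbl : ∀ t ∈ Icc a b, z t (-R) ≤ 0) (hbr : ∀ t ∈ Icc a b, z t R ≤ 0)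
    (hineq : ∀ t ∈ Ioc a b, ∀ x ∈ Ioo (-R) R, 0 < z t x →
      deriv (fun τ => z τ x) t ≤ iteratedDeriv 2 (z t) x + L * z t x) :
    ∀ t ∈ Icc a b, ∀ x ∈ Icc (-R) R, z t x ≤ 0 := by
  set L' := max L 0 with hL'
  have hL'0 : 0 ≤ L' := le_max_right _ _
  have hLL : L ≤ L' := le_max_left _ _
  set E : ℝ → ℝ := fun t => Real.exp (-(L' * t)) with hE
  have hEpos : ∀ t, 0 < E t := fun t => Real.exp_pos _
  have hEd : ∀ t, HasDerivAt E (-L' * E t) t := by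
    intro t
    have h1 : HasDerivAt (fun τ : ℝ => -(L' * τ)) (-L') t := by
      simpa using ((hasDerivAt_id t).const_mul L').fun_neg
    simpa [hE, mul_comm] using h1.exp
  set ζ : ℝ → ℝ → ℝ := fun t x => z t x * E t with hζ
  have key : ∀ t ∈ Icc a b, ∀ x ∈ Icc (-R) R, ζ t x ≤ 0 := by
    apply MP2 hab hR
    · apply ContinuousOn.mul hcont
      fun_prop
    · intro x hx t ht
      exact (hdiff_t x hx t ht).mul ((hEd t).differentiableAt)
    · intro t ht
      exact (hdiff_x t ht).mul contDiff_const
    · intro x hx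
      exact mul_nonpos_of_nonpos_of_nonneg (h0 x hx) (hEpos a).le
    · intro t ht
      exact mul_nonpos_of_nonpos_of_nonneg (hbl t ht) (hEpos t).le
    · intro t ht
      exact mul_nonpos_of_nonpos_of_nonneg (hbr t ht) (hEpos t).le
    · intro t ht x hx hpos
      have hzpos : 0 < z t x := by
        rcases mul_pos_iff.1 hpos with ⟨h, _⟩ | ⟨_, h⟩
        · exact h
        · exact absurd (hEpos t) (not_lt.2 h.le)
      have hzd := hdiff_t x (Ioo_subset_Icc_self hx) t ht
      have hder : deriv (fun τ => ζ τ x) t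
          = deriv (fun τ => z τ x) t * E t + z t x * (-L' * E t) := by
        exact (hzd.hasDerivAt.mul (hEd t)).deriv
      have hit : iteratedDeriv 2 (ζ t) x = iteratedDeriv 2 (z t) x * E t :=
        iter2_mul_const (hdiff_x t ht)
      rw [hder, hit]
      have hi := hineq t ht x hx hzpos
      have hE' := hEpos t
      nlinarith [mul_le_mul_of_nonneg_right hi (hEpos t).le,
        mul_le_mul_of_nonneg_right (mul_le_mul_of_nonneg_right hLL hzpos.le) (hEpos t).le]
  intro t ht x hx
  have hk := key t ht x hx
  simp only [hζ] at hk
  have hE' := hEpos t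
  by_contra hcon
  push_neg at hcon
  nlinarith


lemma MP1L {b C L : ℝ} (hb : 0 < b) (z : ℝ → ℝ → ℝ)
    (hcont : ContinuousOn (fun p : ℝ × ℝ => z p.1 p.2) (Icc 0 b ×ˢ univ))
    (hbdd : ∀ t ∈ Icc 0 b, ∀ x : ℝ, z t x ≤ C)
    (hdiff_t : ∀ x : ℝ, ∀ t ∈ Ioc 0 b, DifferentiableAt ℝ (fun τ => z τ x) t)
    (hdiff_x : ∀ t ∈ Ioc 0 b, ContDiff ℝ 2 (z t))
    (h0 : ∀ x : ℝ, z 0 x ≤ 0)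
    (hineq : ∀ t ∈ Ioc 0 b, ∀ x : ℝ, 0 < z t x →
      deriv (fun τ => z τ x) t ≤ iteratedDeriv 2 (z t) x + L * z t x) :
    ∀ t ∈ Icc 0 b, ∀ x : ℝ, z t x ≤ 0 := by
  set L' := max L 0 with hL'
  have hL'0 : 0 ≤ L' := le_max_right _ _
  have hLL : L ≤ L' := le_max_left _ _
  set E : ℝ → ℝ := fun t => Real.exp (-(L' * t)) with hE
  have hEpos : ∀ t, 0 < E t := fun t => Real.exp_pos _
  have hEle : ∀ t ∈ Icc (0:ℝ) b, E t ≤ 1 := by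
    intro t ht
    apply Real.exp_le_one_iff.2
    have : 0 ≤ L' * t := mul_nonneg hL'0 ht.1
    linarith
  have hEd : ∀ t, HasDerivAt E (-L' * E t) t := by
    intro t
    have h1 : HasDerivAt (fun τ : ℝ => -(L' * τ)) (-L') t := by
      simpa using ((hasDerivAt_id t).const_mul L').fun_neg
    simpa [hE, mul_comm] using h1.exp
  set ζ : ℝ → ℝ → ℝ := fun t x => z t x * E t with hζ
  have key : ∀ t ∈ Icc 0 b, ∀ x : ℝ, ζ t x ≤ 0 := by
    apply MP1 (C := max C 0) hb
    · apply ContinuousOn.mul hcont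
      fun_prop
    · intro t ht x
      rcases le_or_gt (z t x) 0 with h | h
      · exact le_trans (mul_nonpos_of_nonpos_of_nonneg h (hEpos t).le) (le_max_right _ _)
      · calc z t x * E t ≤ C * 1 := by
              apply mul_le_mul (hbdd t ht x) (hEle t ht) (hEpos t).le
              exact le_trans h.le (hbdd t ht x)
          _ ≤ max C 0 := by simp [le_max_left]
    · intro x t ht
      exact (hdiff_t x t ht).mul ((hEd t).differentiableAt)
    · intro t ht
      exact (hdiff_x t ht).mul contDiff_const
    · intro x
      exact mul_nonpos_of_nonpos_of_nonneg (h0 x) (hEpos 0).le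
    · intro t ht x hpos
      have hzpos : 0 < z t x := by
        rcases mul_pos_iff.1 hpos with ⟨h, _⟩ | ⟨_, h⟩
        · exact h
        · exact absurd (hEpos t) (not_lt.2 h.le)
      have hzd := hdiff_t x t ht
      have hder : deriv (fun τ => ζ τ x) t
          = deriv (fun τ => z τ x) t * E t + z t x * (-L' * E t) :=
        (hzd.hasDerivAt.mul (hEd t)).deriv
      have hit : iteratedDeriv 2 (ζ t) x = iteratedDeriv 2 (z t) x * E t :=
        iter2_mul_const (hdiff_x t ht)
      rw [hder, hit]
      have hi := hineq t ht x hzpos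
      nlinarith [mul_le_mul_of_nonneg_right hi (hEpos t).le,
        mul_le_mul_of_nonneg_right (mul_le_mul_of_nonneg_right hLL hzpos.le) (hEpos t).le]
  intro t ht x
  have hk := key t ht x
  simp only [hζ] at hk
  have hE' := hEpos t
  by_contra hcon
  push_neg at hcon
  nlinarith


noncomputable def w1 (t x : ℝ) : ℝ :=
  Real.exp (-2*t) * ((Real.sqrt (40*t+1))⁻¹ * Real.exp (-(10*x^2)/(40*t+1)) - Real.exp (-10)) / 1000

noncomputable def w1x (t x : ℝ) : ℝ :=
  Real.exp (-2*t) * ((Real.sqrt (40*t+1))⁻¹ * (Real.exp (-(10*x^2)/(40*t+1)) * (-(20*x)/(40*t+1)))) / 1000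

lemma sqrt_r_pos {t : ℝ} (ht : 0 ≤ t) : 0 < Real.sqrt (40*t+1) :=
  Real.sqrt_pos.2 (by linarith)

lemma exp_arg_hasDerivAt_x (t x : ℝ) (hr : (40*t+1) ≠ 0) :
    HasDerivAt (fun y : ℝ => -(10*y^2)/(40*t+1)) (-(20*x)/(40*t+1)) x := by
  have h : HasDerivAt (fun y : ℝ => -(10*y^2)) (-(20*x)) x := by
    have h0 := ((hasDerivAt_pow 2 x).const_mul (10:ℝ)).fun_neg
    refine h0.congr_deriv ?_
    ring
  exact h.div_const _

lemma w1_hasDerivAt_x {t : ℝ} (ht : 0 ≤ t) (x : ℝ) : HasDerivAt (w1 t) (w1x t x) x := by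
  have hr : (40*t+1) ≠ 0 := by linarith
  have h1 := (exp_arg_hasDerivAt_x t x hr).exp
  have h2 := ((h1.const_mul (Real.sqrt (40*t+1))⁻¹).sub_const (Real.exp (-10))).const_mul
      (Real.exp (-2*t))
  have h3 := h2.div_const (1000 : ℝ)
  have hfun : w1 t = fun y => Real.exp (-2*t) * ((Real.sqrt (40*t+1))⁻¹ * Real.exp (-(10*y^2)/(40*t+1)) - Real.exp (-10)) / 1000 := by
    funext y; simp [w1]
  rw [hfun]
  first
  | exact h3
  | (convert h3 using 1; simp [w1x]; ring)

lemma w1x_hasDerivAt_x {t : ℝ} (ht : 0 ≤ t) (x : ℝ) :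
    HasDerivAt (w1x t)
      (Real.exp (-2*t) * ((Real.sqrt (40*t+1))⁻¹ *
        (Real.exp (-(10*x^2)/(40*t+1)) * (400*x^2/(40*t+1)^2 - 20/(40*t+1)))) / 1000) x := by
  have hr : (40*t+1) ≠ 0 := by linarith
  have h1 := (exp_arg_hasDerivAt_x t x hr).exp
  have hlin : HasDerivAt (fun y : ℝ => -(20*y)/(40*t+1)) (-20/(40*t+1)) x := by
    have h : HasDerivAt (fun y : ℝ => -(20*y)) (-20 : ℝ) x := by
      simpa using ((hasDerivAt_id x).const_mul (20:ℝ)).fun_neg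
    exact h.div_const _
  have h2 := h1.fun_mul hlin
  have h3 := ((h2.const_mul (Real.sqrt (40*t+1))⁻¹).const_mul (Real.exp (-2*t))).div_const (1000:ℝ)
  have hfun : w1x t = fun y => Real.exp (-2*t) * ((Real.sqrt (40*t+1))⁻¹ * (Real.exp (-(10*y^2)/(40*t+1)) * (-(20*y)/(40*t+1)))) / 1000 := by
    funext y; simp [w1x]
  rw [hfun]
  refine h3.congr_deriv ?_
  have hrne : (40*t+1) ≠ 0 := hr
  field_simp
  ring

lemma w1_iter2 {t : ℝ} (ht : 0 ≤ t) (x : ℝ) :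
    iteratedDeriv 2 (w1 t) x
      = Real.exp (-2*t) * ((Real.sqrt (40*t+1))⁻¹ *
        (Real.exp (-(10*x^2)/(40*t+1)) * (400*x^2/(40*t+1)^2 - 20/(40*t+1)))) / 1000 :=
  iter2_of_hasDerivAt (fun y => w1_hasDerivAt_x ht y) (w1x_hasDerivAt_x ht x)

lemma w1_hasDerivAt_t {t x : ℝ} (ht : 0 < t) :
    HasDerivAt (fun τ => w1 τ x) (iteratedDeriv 2 (w1 t) x - 2 * w1 t x) t := by
  have hr : (0:ℝ) < 40*t+1 := by linarith
  have hy := sqrt_r_pos ht.le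
  set y := Real.sqrt (40*t+1) with hyd
  have hyy : y^2 = 40*t+1 := Real.sq_sqrt hr.le
  -- derivative of τ ↦ 40τ+1
  have hl : HasDerivAt (fun τ : ℝ => 40*τ+1) 40 t := by
    simpa using ((hasDerivAt_id t).const_mul (40:ℝ)).add_const 1
  -- sqrt part
  have hsq : HasDerivAt (fun τ : ℝ => Real.sqrt (40*τ+1)) (1/(2*y) * 40) t := by
    have := (Real.hasDerivAt_sqrt (ne_of_gt hr)).comp t hl
    exact this
  have hinv : HasDerivAt (fun τ : ℝ => (Real.sqrt (40*τ+1))⁻¹) (-(1/(2*y) * 40)/y^2) t :=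
    hsq.fun_inv (ne_of_gt hy)
  -- exp argument part
  have hinv2 : HasDerivAt (fun τ : ℝ => (40*τ+1)⁻¹) (-40/(40*t+1)^2) t := by
    have := hl.fun_inv (ne_of_gt hr)
    exact this
  have harg : HasDerivAt (fun τ : ℝ => -(10*x^2)/(40*τ+1)) ((-(10*x^2)) * (-40/(40*t+1)^2)) t := by
    have h := hinv2.const_mul (-(10*x^2))
    simpa only [div_eq_mul_inv] using h
  have hexp := harg.exp
  -- product
  have hprod := hinv.fun_mul hexp
  have hs := hprod.sub_const (Real.exp (-10))
  -- outer exp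
  have hout : HasDerivAt (fun τ : ℝ => Real.exp (-2*τ)) (-2 * Real.exp (-2*t)) t := by
    have h1 : HasDerivAt (fun τ : ℝ => -2*τ) (-2 : ℝ) t := by
      simpa using (hasDerivAt_id t).const_mul (-2:ℝ)
    simpa [mul_comm] using h1.exp
  have hfull := (hout.fun_mul hs).div_const (1000:ℝ)
  have hfun : (fun τ => w1 τ x) = fun τ => Real.exp (-2*τ) * ((Real.sqrt (40*τ+1))⁻¹ * Real.exp (-(10*x^2)/(40*τ+1)) - Real.exp (-10)) / 1000 := by
    funext τ; simp [w1]
  rw [hfun]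
  refine hfull.congr_deriv ?_
  rw [w1_iter2 ht.le x]
  simp only [w1, ← hyd]
  rw [show (40*t+1 : ℝ) = y^2 from hyy.symm]
  have hyne : y ≠ 0 := ne_of_gt hy
  field_simp
  try ring


lemma hasDerivAt_cos_sq (k x : ℝ) :
    HasDerivAt (fun y => Real.cos (k*y)^2) (-(2*k) * (Real.cos (k*x) * Real.sin (k*x))) x := by
  have h1 : HasDerivAt (fun y : ℝ => k*y) k x := by
    simpa [mul_comm] using (hasDerivAt_id x).const_mul k
  have h2 := h1.cos
  have h3 := h2.fun_pow 2
  refine h3.congr_deriv ?_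
  ring

lemma hasDerivAt_cos_sin (k x : ℝ) :
    HasDerivAt (fun y => -(2*k) * (Real.cos (k*y) * Real.sin (k*y)))
      (2*k^2*(Real.sin (k*x)^2 - Real.cos (k*x)^2)) x := by
  have h1 : HasDerivAt (fun y : ℝ => k*y) k x := by
    simpa [mul_comm] using (hasDerivAt_id x).const_mul k
  have h := ((h1.cos.fun_mul h1.sin)).const_mul (-(2*k))
  refine h.congr_deriv ?_
  ring

lemma iter2_amp_cos_sq (A k x : ℝ) :
    iteratedDeriv 2 (fun y => A * Real.cos (k*y)^2) x
      = A * (2*k^2*(Real.sin (k*x)^2 - Real.cos (k*x)^2)) := by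
  apply iter2_of_hasDerivAt (f' := fun y => A * (-(2*k) * (Real.cos (k*y) * Real.sin (k*y))))
  · intro y
    exact (hasDerivAt_cos_sq k y).const_mul A
  · exact (hasDerivAt_cos_sin k x).const_mul A

lemma iter2_const (k x : ℝ) : iteratedDeriv 2 (fun _ : ℝ => k) x = 0 :=
  iter2_of_hasDerivAt (fun y => hasDerivAt_const y k) (hasDerivAt_const x 0)

-- numeric: e ≥ 2 consequences
lemma exp_seven_ge : (128:ℝ) ≤ Real.exp 7 := by
  have h2 : (2:ℝ) ≤ Real.exp 1 := by
    have := Real.exp_one_gt_d9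
    linarith
  calc (128:ℝ) = 2^7 := by norm_num
    _ ≤ (Real.exp 1)^7 := by
        apply pow_le_pow_left₀ (by norm_num) h2
    _ = Real.exp 7 := by
        rw [← Real.exp_nat_mul 1 7]
        norm_num

-- continuity of w1 in both variables on t ≥ 0
lemma w1_contOn : ContinuousOn (fun p : ℝ × ℝ => w1 p.1 p.2) {p : ℝ × ℝ | 0 ≤ p.1} := by
  intro p hp
  apply ContinuousAt.continuousWithinAt
  have hr : (40 * p.1 + 1) ≠ 0 := by
    have : (0:ℝ) ≤ p.1 := hp
    positivity
  have hs : Real.sqrt (40 * p.1 + 1) ≠ 0 := by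
    apply ne_of_gt
    apply Real.sqrt_pos.2
    have : (0:ℝ) ≤ p.1 := hp
    linarith
  have h1 : ContinuousAt (fun q : ℝ × ℝ => Real.sqrt (40 * q.1 + 1)) p := by
    apply Real.continuous_sqrt.continuousAt.comp
    fun_prop
  have h2 : ContinuousAt (fun q : ℝ × ℝ => (Real.sqrt (40 * q.1 + 1))⁻¹) p := h1.inv₀ hs
  have hnum : ContinuousAt (fun q : ℝ × ℝ => -(10 * q.2 ^ 2)) p := by fun_prop
  have hden : ContinuousAt (fun q : ℝ × ℝ => 40 * q.1 + 1) p := by fun_prop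
  have h3 : ContinuousAt (fun q : ℝ × ℝ => -(10 * q.2 ^ 2) / (40 * q.1 + 1)) p :=
    hnum.div hden hr
  have h4 : ContinuousAt (fun q : ℝ × ℝ => Real.exp (-(10 * q.2 ^ 2) / (40 * q.1 + 1))) p :=
    Real.continuous_exp.continuousAt.comp h3
  have h5 : ContinuousAt (fun q : ℝ × ℝ => Real.exp (-2 * q.1)) p := by fun_prop
  exact ((h5.mul ((h2.mul h4).sub continuousAt_const)).div_const 1000)

-- initial bound
lemma w1_zero (y : ℝ) : w1 0 y = (Real.exp (-(10 * y ^ 2)) - Real.exp (-10)) / 1000 := by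
  simp [w1]

lemma w1_boundary {t y : ℝ} (ht : t ∈ Icc (0:ℝ) 8) (hy : y ^ 2 = 900) : w1 t y ≤ 0 := by
  have hr : (1:ℝ) ≤ 40 * t + 1 := by have := ht.1; linarith
  have hr' : (0:ℝ) < 40 * t + 1 := by linarith
  have h1 : (Real.sqrt (40 * t + 1))⁻¹ ≤ 1 := by
    rw [inv_le_one_iff₀]
    right
    have h := Real.sqrt_le_sqrt hr
    rwa [Real.sqrt_one] at h
  have hsp : 0 < Real.sqrt (40 * t + 1) := Real.sqrt_pos.2 hr'
  have h2 : Real.exp (-(10 * y ^ 2) / (40 * t + 1)) ≤ Real.exp (-10) := by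
    apply Real.exp_le_exp.2
    rw [div_le_iff₀ hr', hy]
    nlinarith [ht.2]
  have h3 : (Real.sqrt (40 * t + 1))⁻¹ * Real.exp (-(10 * y ^ 2) / (40 * t + 1)) ≤ Real.exp (-10) := by
    calc (Real.sqrt (40 * t + 1))⁻¹ * Real.exp (-(10 * y ^ 2) / (40 * t + 1))
        ≤ 1 * Real.exp (-10) := by
          apply mul_le_mul h1 h2 (Real.exp_pos _).le (by norm_num)
      _ = Real.exp (-10) := one_mul _
  have he : 0 < Real.exp (-2 * t) := Real.exp_pos _
  simp only [w1]
  apply div_nonpos_of_nonpos_of_nonneg _ (by norm_num)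
  apply mul_nonpos_of_nonneg_of_nonpos he.le
  linarith

-- lower bound on the inner region
lemma w1_inner {t y : ℝ} (ht : t ∈ Icc (6:ℝ) 8) (hy : y ∈ Icc (-8:ℝ) 8) :
    Real.exp (-19) / 26000 ≤ w1 t y := by
  have hr1 : (241:ℝ) ≤ 40 * t + 1 := by have := ht.1; linarith
  have hr2 : (40:ℝ) * t + 1 ≤ 321 := by have := ht.2; linarith
  have hr' : (0:ℝ) < 40 * t + 1 := by linarith
  have hy2 : y ^ 2 ≤ 64 := by nlinarith [hy.1, hy.2]
  have hy0 : 0 ≤ y ^ 2 := sq_nonneg y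
  -- sqrt bound
  have hs1 : Real.sqrt (40 * t + 1) ≤ 19 := by
    have h := Real.sqrt_le_sqrt (show (40 * t + 1 : ℝ) ≤ 361 by linarith)
    have h361 : Real.sqrt 361 = 19 := by
      rw [show (361:ℝ) = 19 ^ 2 by norm_num]
      exact Real.sqrt_sq (by norm_num)
    rwa [h361] at h
  have hsp : 0 < Real.sqrt (40 * t + 1) := Real.sqrt_pos.2 hr'
  have hinv : (19:ℝ)⁻¹ ≤ (Real.sqrt (40 * t + 1))⁻¹ := inv_anti₀ hsp hs1
  -- exp bound
  have hexp1 : Real.exp (-3) ≤ Real.exp (-(10 * y ^ 2) / (40 * t + 1)) := by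
    apply Real.exp_le_exp.2
    rw [le_div_iff₀ hr']
    nlinarith
  have hexp2 : Real.exp (-2 * t) ≥ Real.exp (-16) := by
    apply Real.exp_le_exp.2
    linarith [ht.2]
  -- numeric core : (1/19) * exp (-3) - exp (-10) ≥ exp (-3) / 26
  have he7 : Real.exp (-10) ≤ Real.exp (-3) / 128 := by
    rw [show (-10:ℝ) = -3 + -7 by norm_num, Real.exp_add]
    have h7 : (128:ℝ) ≤ Real.exp 7 := exp_seven_ge
    have hp : Real.exp (-7) ≤ 1/128 := by
      rw [Real.exp_neg]
      apply inv_le_of_inv_le₀ (by norm_num)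
      simpa using h7
    have := Real.exp_pos (-3)
    calc Real.exp (-3) * Real.exp (-7) ≤ Real.exp (-3) * (1/128) := by
          apply mul_le_mul_of_nonneg_left hp this.le
      _ = Real.exp (-3) / 128 := by ring
  have hcore : Real.exp (-3) / 26 ≤ (19:ℝ)⁻¹ * Real.exp (-3) - Real.exp (-10) := by
    have := Real.exp_pos (-3)
    nlinarith
  -- assemble
  have hposc : (0:ℝ) < Real.exp (-3) / 26 := by positivity
  have hinner : Real.exp (-3) / 26
      ≤ (Real.sqrt (40 * t + 1))⁻¹ * Real.exp (-(10 * y ^ 2) / (40 * t + 1)) - Real.exp (-10) := by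
    have h1 : (19:ℝ)⁻¹ * Real.exp (-3)
        ≤ (Real.sqrt (40 * t + 1))⁻¹ * Real.exp (-(10 * y ^ 2) / (40 * t + 1)) := by
      apply mul_le_mul hinv hexp1 (Real.exp_pos _).le (by positivity)
    linarith
  have hfin : Real.exp (-16) * (Real.exp (-3) / 26)
      ≤ Real.exp (-2 * t) * ((Real.sqrt (40 * t + 1))⁻¹ * Real.exp (-(10 * y ^ 2) / (40 * t + 1)) - Real.exp (-10)) := by
    apply mul_le_mul hexp2 hinner hposc.le (Real.exp_pos _).le
  simp only [w1]
  rw [div_le_div_iff₀ (by norm_num) (by norm_num)]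
  calc Real.exp (-19) * 1000 = (Real.exp (-16) * (Real.exp (-3) / 26)) * 26000 := by
        rw [show (-19:ℝ) = -16 + -3 by norm_num, Real.exp_add]; ring
    _ ≤ _ := by
        apply mul_le_mul_of_nonneg_right hfin (by norm_num)
-- convenient accessors
lemma vdiff_t {c : ℝ} {u v : ℝ → ℝ → ℝ} (hsol : IsBddSol1 c u v) (y : ℝ) {t : ℝ} (ht : 0 < t) :
    DifferentiableAt ℝ (fun τ => v τ y) t := by
  have h := (hsol.t_reg_v y).differentiableOn one_ne_zero
  exact h.differentiableAt (Ioi_mem_nhds ht)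

lemma udiff_t {c : ℝ} {u v : ℝ → ℝ → ℝ} (hsol : IsBddSol1 c u v) (y : ℝ) {t : ℝ} (ht : 0 < t) :
    DifferentiableAt ℝ (fun τ => u τ y) t := by
  have h := (hsol.t_reg_u y).differentiableOn one_ne_zero
  exact h.differentiableAt (Ioi_mem_nhds ht)

lemma w1_contDiff_x {t : ℝ} (ht : 0 ≤ t) : ContDiff ℝ 2 (w1 t) := by
  have h1 : ContDiff ℝ 2 (fun y : ℝ => -(10 * y ^ 2) / (40 * t + 1)) :=
    ContDiff.div_const (by fun_prop) _
  have h2 : ContDiff ℝ 2 (fun y : ℝ => Real.exp (-(10 * y ^ 2) / (40 * t + 1))) :=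
    (Real.contDiff_exp.of_le le_top).comp h1
  have h3 : ContDiff ℝ 2 (fun y : ℝ =>
      Real.exp (-2 * t) * ((Real.sqrt (40 * t + 1))⁻¹ * Real.exp (-(10 * y ^ 2) / (40 * t + 1)) - Real.exp (-10)) / 1000) :=
    ContDiff.div_const ((contDiff_const.mul ((contDiff_const.mul h2).sub contDiff_const))) _
  exact h3

lemma stepC1 {c : ℝ} {u v : ℝ → ℝ → ℝ} (hsol : IsBddSol1 c u v) (hc : 0 < c)
    (hrange : ∀ t, 0 ≤ t → ∀ x, (u t x, v t x) ∈ calR)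
    (hinit : ∀ x ∈ Icc (-1:ℝ) 1, 1/1000 < v 0 x) :
    ∀ t ∈ Icc (0:ℝ) 8, ∀ y ∈ Icc (-30:ℝ) 30, w1 t y ≤ v t y := by
  have key := MP2 (a := 0) (b := 8) (R := 30) (by norm_num) (by norm_num)
    (fun t y => w1 t y - v t y) ?_ ?_ ?_ ?_ ?_ ?_ ?_
  · intro t ht y hy
    have h := key t ht y hy
    linarith
  · -- continuity
    apply ContinuousOn.sub
    · exact w1_contOn.mono (by intro p hp; exact hp.1.1)
    · exact hsol.cont_v.mono (by intro p hp; exact ⟨hp.1.1, trivial⟩)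
  · -- t-differentiability
    intro y hy t ht
    exact (w1_hasDerivAt_t ht.1).differentiableAt.sub (vdiff_t hsol y ht.1)
  · -- x-regularity
    intro t ht
    exact (w1_contDiff_x ht.1.le).sub (hsol.x_reg_v t ht.1)
  · -- initial
    intro y hy
    show w1 0 y - v 0 y ≤ 0
    rw [w1_zero y]
    have hv0 : 0 ≤ v 0 y := (hrange 0 le_rfl y).1
    rcases le_or_gt (y ^ 2) 1 with h | h
    · have hyI : y ∈ Icc (-1:ℝ) 1 := by
        constructor <;> nlinarith
      have hvy := hinit y hyI
      have h1 : Real.exp (-(10 * y ^ 2)) ≤ 1 := Real.exp_le_one_iff.2 (by nlinarith)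
      have h2 : 0 < Real.exp (-10) := Real.exp_pos _
      have h3 : (Real.exp (-(10 * y ^ 2)) - Real.exp (-10)) / 1000 ≤ 1 / 1000 := by
        rw [div_le_div_iff₀ (by norm_num) (by norm_num)]
        nlinarith
      linarith
    · have h1 : Real.exp (-(10 * y ^ 2)) ≤ Real.exp (-10) :=
        Real.exp_le_exp.2 (by nlinarith)
      have : (Real.exp (-(10 * y ^ 2)) - Real.exp (-10)) / 1000 ≤ 0 := by
        apply div_nonpos_of_nonpos_of_nonneg (by linarith) (by norm_num)
      linarith
  · -- left boundary
    intro t ht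
    have h1 := w1_boundary ht (by norm_num : ((-30:ℝ)) ^ 2 = 900)
    have hv : 0 ≤ v t (-30) := (hrange t ht.1 (-30)).1
    show w1 t (-30) - v t (-30) ≤ 0
    linarith
  · -- right boundary
    intro t ht
    have h1 := w1_boundary ht (by norm_num : ((30:ℝ)) ^ 2 = 900)
    have hv : 0 ≤ v t 30 := (hrange t ht.1 30).1
    show w1 t 30 - v t 30 ≤ 0
    linarith
  · -- interior inequality
    intro t ht y hy hz
    have hvd := vdiff_t hsol y ht.1
    have hd : deriv (fun τ => w1 τ y - v τ y) t
        = (iteratedDeriv 2 (w1 t) y - 2 * w1 t y) - deriv (fun τ => v τ y) t := by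
      rw [deriv_fun_sub (w1_hasDerivAt_t ht.1).differentiableAt hvd]
      rw [(w1_hasDerivAt_t ht.1).deriv]
    have hw1cd : ContDiff ℝ 2 (w1 t) := w1_contDiff_x ht.1.le
    have hsplit : iteratedDeriv 2 (fun y => w1 t y - v t y) y
        = iteratedDeriv 2 (w1 t) y - iteratedDeriv 2 (v t) y :=
      iter2_sub hw1cd (hsol.x_reg_v t ht.1) y
    rw [hd, hsplit, hsol.eq_v t ht.1 y]
    -- reaction comparison
    have hm := hrange t ht.1.le y
    obtain ⟨h0v, hvu, hu1⟩ := hm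
    have hpos : 0 ≤ c * (u t y - v t y) * v t y := by
      apply mul_nonneg (mul_nonneg hc.le (by simp at hvu ⊢; linarith)) h0v
    simp only at hz h0v hvu hu1 ⊢
    nlinarith
noncomputable def rbar : ℝ := Real.exp (-19) / 26000

lemma rbar_pos : 0 < rbar := by unfold rbar; positivity

lemma stepCor1 {c : ℝ} {u v : ℝ → ℝ → ℝ} (hsol : IsBddSol1 c u v) (hc : 0 < c)
    (hrange : ∀ t, 0 ≤ t → ∀ x, (u t x, v t x) ∈ calR)
    (hinit : ∀ x ∈ Icc (-1:ℝ) 1, 1/1000 < v 0 x) :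
    ∀ t ∈ Icc (6:ℝ) 8, ∀ y ∈ Icc (-8:ℝ) 8, rbar ≤ v t y := by
  intro t ht y hy
  have h1 := stepC1 hsol hc hrange hinit t ⟨by linarith [ht.1], ht.2⟩ y
    ⟨by linarith [hy.1], by linarith [hy.2]⟩
  have h2 := w1_inner ht hy
  unfold rbar
  linarith

lemma stepC2 {c : ℝ} {u v : ℝ → ℝ → ℝ} (hsol : IsBddSol1 c u v) (hc : 0 < c)
    (hc4 : 4 ≤ c * rbar)
    (hrange : ∀ t, 0 ≤ t → ∀ x, (u t x, v t x) ∈ calR)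
    (hlow : ∀ t ∈ Icc (6:ℝ) 8, ∀ y ∈ Icc (-8:ℝ) 8, rbar ≤ v t y) :
    ∀ t ∈ Icc (6:ℝ) 8, ∀ y ∈ Icc (-8:ℝ) 8,
      (1 - Real.exp (-(c*rbar)*(t-6)))/2 * Real.cos (π/16*y)^2 ≤ u t y := by
  have hcosCD : ContDiff ℝ 2 (fun w : ℝ => Real.cos (π/16*w)^2) :=
    ((Real.contDiff_cos.of_le le_top).comp (contDiff_const.mul contDiff_id)).pow 2
  set lc := c * rbar with hlc
  have hlcpos : 0 < lc := by linarith
  set η : ℝ → ℝ := fun t => (1 - Real.exp (-lc*(t-6)))/2 with hη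
  have hηd : ∀ t : ℝ, HasDerivAt η (lc * Real.exp (-lc*(t-6))/2) t := by
    intro t
    have h1 : HasDerivAt (fun τ : ℝ => -lc*(τ-6)) (-lc) t := by
      simpa using ((hasDerivAt_id t).sub_const 6).const_mul (-lc)
    have h2 := h1.exp
    have h3 := (h2.const_sub 1).div_const 2
    refine h3.congr_deriv ?_
    ring
  have hηbound : ∀ t : ℝ, 6 ≤ t → 0 ≤ η t ∧ η t ≤ 1/2 := by
    intro t ht
    have hE1 : Real.exp (-lc*(t-6)) ≤ 1 := Real.exp_le_one_iff.2 (by nlinarith)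
    have hE0 : 0 < Real.exp (-lc*(t-6)) := Real.exp_pos _
    constructor <;> simp only [hη] <;> linarith
  have key := MP2 (a := 6) (b := 8) (R := 8) (by norm_num) (by norm_num)
    (fun t y => η t * Real.cos (π/16*y)^2 - u t y) ?_ ?_ ?_ ?_ ?_ ?_ ?_
  · intro t ht y hy
    have h := key t ht y hy
    simp only [hη] at h ⊢
    linarith
  · apply ContinuousOn.sub
    · apply Continuous.continuousOn
      fun_prop
    · exact hsol.cont_u.mono (by intro p hp; exact ⟨le_trans (by norm_num) hp.1.1, trivial⟩)
  · intro y hy t ht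
    have h6 : (0:ℝ) < t := by linarith [ht.1]
    exact ((hηd t).mul_const _).differentiableAt.sub (udiff_t hsol y h6)
  · intro t ht
    have h6 : (0:ℝ) < t := by linarith [ht.1]
    exact ((contDiff_const.mul hcosCD).sub (hsol.x_reg_u t h6))
  · intro y hy
    have hu0 : 0 ≤ u 6 y := by
      have h := hrange 6 (by norm_num) y
      have := h.1; have := h.2.1
      linarith
    have : η 6 = 0 := by simp [hη]
    show η 6 * Real.cos (π/16*y)^2 - u 6 y ≤ 0
    rw [this]
    linarith
  · intro t ht
    have hu0 : 0 ≤ u t (-8) := by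
      have h := hrange t (by linarith [ht.1]) (-8)
      have := h.1; have := h.2.1
      linarith
    have hcos : Real.cos (π/16*(-8)) = 0 := by
      rw [show π/16*(-8) = -(π/2) by ring, Real.cos_neg]
      exact Real.cos_pi_div_two
    show η t * Real.cos (π/16*(-8))^2 - u t (-8) ≤ 0
    rw [hcos]
    simp
    linarith
  · intro t ht
    have hu0 : 0 ≤ u t 8 := by
      have h := hrange t (by linarith [ht.1]) 8
      have := h.1; have := h.2.1
      linarith
    have hcos : Real.cos (π/16*8) = 0 := by
      rw [show π/16*8 = π/2 by ring]
      exact Real.cos_pi_div_two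
    show η t * Real.cos (π/16*8)^2 - u t 8 ≤ 0
    rw [hcos]
    simp
    linarith
  · intro t ht y hy hz
    have h6 : (0:ℝ) < t := by linarith [ht.1]
    -- derivatives
    have hud := udiff_t hsol y h6
    have hd : deriv (fun τ => η τ * Real.cos (π/16*y)^2 - u τ y) t
        = lc * Real.exp (-lc*(t-6))/2 * Real.cos (π/16*y)^2 - deriv (fun τ => u τ y) t := by
      rw [deriv_fun_sub ((hηd t).mul_const _).differentiableAt hud]
      rw [((hηd t).mul_const _).deriv]
    have hsplit : iteratedDeriv 2 (fun w => η t * Real.cos (π/16*w)^2 - u t w) y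
        = η t * (2*(π/16)^2*(Real.sin (π/16*y)^2 - Real.cos (π/16*y)^2))
          - iteratedDeriv 2 (u t) y := by
      rw [iter2_sub (contDiff_const.mul hcosCD) (hsol.x_reg_u t h6) y]
      rw [iter2_amp_cos_sq]
    show deriv (fun τ => η τ * Real.cos (π/16*y)^2 - u τ y) t
        ≤ iteratedDeriv 2 (fun w => η t * Real.cos (π/16*w)^2 - u t w) y
    rw [hd, hsplit, hsol.eq_u t h6 y]
    -- inequalities
    obtain ⟨hv0, hvu, hu1⟩ := hrange t h6.le y
    simp only at hv0 hvu hu1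
    have hvrb := hlow t ⟨ht.1.le, ht.2⟩ y ⟨hy.1.le, hy.2.le⟩
    set co := Real.cos (π/16*y)^2 with hco
    set si := Real.sin (π/16*y)^2 with hsi
    have hpyth : si + co = 1 := by
      simp only [hco, hsi]
      exact Real.sin_sq_add_cos_sq _
    have hco0 : 0 ≤ co := sq_nonneg _
    have hsi0 : 0 ≤ si := sq_nonneg _
    have hco1 : co ≤ 1 := by linarith
    have hηb := hηbound t ht.1.le
    have hE1 : Real.exp (-lc*(t-6)) ≤ 1 := Real.exp_le_one_iff.2 (by nlinarith [ht.1])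
    have hE0 : 0 < Real.exp (-lc*(t-6)) := Real.exp_pos _
    have hk2 : (π/16)^2 ≤ 1/16 := by
      have := Real.pi_le_four
      have := Real.pi_pos
      nlinarith
    have hk0 : 0 ≤ (π/16)^2 := sq_nonneg _
    -- u < η co ≤ 1/2
    have huU : u t y < η t * co := by linarith
    have hηco : η t * co ≤ (1/2) * 1 := mul_le_mul hηb.2 hco1 hco0 (by norm_num)
    have hu12 : u t y < 1/2 := by nlinarith
    -- reaction bound
    have ha2 : (1/2) * rbar ≤ (1 - u t y) * v t y :=
      mul_le_mul (by linarith) (by linarith) rbar_pos.le (by linarith)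
    have ha2' : c * rbar ≤ 2 * c * ((1 - u t y) * v t y) := by
      have := mul_le_mul_of_nonneg_left ha2 (by linarith : (0:ℝ) ≤ 2 * c)
      linarith
    -- diffusion bound
    have e1 : 0 ≤ η t * (π/16)^2 * si := mul_nonneg (mul_nonneg hηb.1 hk0) hsi0
    have e2a : η t * (π/16)^2 ≤ (1/2)*(1/16) := mul_le_mul hηb.2 hk2 hk0 (by norm_num)
    have e2 : η t * (π/16)^2 * co ≤ (1/2)*(1/16)*1 := mul_le_mul e2a hco1 hco0 (by norm_num)
    have ha3 : -1 ≤ η t * (2*(π/16)^2*(si - co)) := by nlinarith [e1, e2]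
    -- time-derivative bound
    have f1 : lc * Real.exp (-lc*(t-6)) ≤ lc * 1 := mul_le_mul_of_nonneg_left hE1 hlcpos.le
    have f2 : (0:ℝ) ≤ lc * Real.exp (-lc*(t-6)) / 2 := by positivity
    have f3 : lc * Real.exp (-lc*(t-6))/2 * co ≤ lc * Real.exp (-lc*(t-6))/2 * 1 :=
      mul_le_mul_of_nonneg_left hco1 f2
    have ha1 : lc * Real.exp (-lc*(t-6))/2 * co ≤ lc / 2 := by linarith
    -- reaction bound
    have hreact : c * rbar ≤ (2*c*(1 - u t y)+1) * v t y := by nlinarith [ha2', hv0]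
    linarith [ha1, ha3, hreact, hu1, hc4]
lemma exp_four_ge : (16:ℝ) ≤ Real.exp 4 := by
  have h2 : (2:ℝ) ≤ Real.exp 1 := by
    have := Real.exp_one_gt_d9; linarith
  calc (16:ℝ) = 2^4 := by norm_num
    _ ≤ (Real.exp 1)^4 := by apply pow_le_pow_left₀ (by norm_num) h2
    _ = Real.exp 4 := by rw [← Real.exp_nat_mul 1 4]; norm_num

lemma stepCor2 {c : ℝ} {u v : ℝ → ℝ → ℝ} (hsol : IsBddSol1 c u v) (hc : 0 < c)
    (hc4 : 4 ≤ c * rbar)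
    (hrange : ∀ t, 0 ≤ t → ∀ x, (u t x, v t x) ∈ calR)
    (hlow : ∀ t ∈ Icc (6:ℝ) 8, ∀ y ∈ Icc (-8:ℝ) 8, rbar ≤ v t y) :
    ∀ t ∈ Icc (7:ℝ) 8, ∀ y ∈ Icc (-4:ℝ) 4, 15/64 ≤ u t y := by
  intro t ht y hy
  have h := stepC2 hsol hc hc4 hrange hlow t ⟨by linarith [ht.1], ht.2⟩ y
    ⟨by linarith [hy.1], by linarith [hy.2]⟩
  -- η t ≥ 15/32
  have hE : Real.exp (-(c*rbar)*(t-6)) ≤ 1/16 := by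
    have h1 : -(c*rbar)*(t-6) ≤ -4 := by nlinarith [ht.1]
    calc Real.exp (-(c*rbar)*(t-6)) ≤ Real.exp (-4) := Real.exp_le_exp.2 h1
      _ ≤ 1/16 := by
          rw [Real.exp_neg]
          apply inv_le_of_inv_le₀ (by norm_num)
          simpa using exp_four_ge
  have hη : (15/32 : ℝ) ≤ (1 - Real.exp (-(c*rbar)*(t-6)))/2 := by linarith
  -- cos ≥ 1/2
  have hpi := Real.pi_pos
  have hcos : (1/2 : ℝ) ≤ Real.cos (π/16*y)^2 := by
    rw [Real.cos_sq]
    have harg : π/16*y*2 ∈ Icc (-(π/2)) (π/2) := by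
      constructor <;> nlinarith [hy.1, hy.2]
    have := Real.cos_nonneg_of_mem_Icc harg
    rw [show 2*(π/16*y) = π/16*y*2 by ring]
    linarith
  have hfin : (15/32 : ℝ) * (1/2) ≤ (1 - Real.exp (-(c*rbar)*(t-6)))/2 * Real.cos (π/16*y)^2 :=
    mul_le_mul hη hcos (by norm_num) (by linarith [Real.exp_pos (-(c*rbar)*(t-6))])
  calc (15/64 : ℝ) = 15/32 * (1/2) := by norm_num
    _ ≤ _ := hfin.trans h

lemma stepC3 {c : ℝ} {u v : ℝ → ℝ → ℝ} (hsol : IsBddSol1 c u v) (hc60 : 60 ≤ c)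
    (hrange : ∀ t, 0 ≤ t → ∀ x, (u t x, v t x) ∈ calR)
    {T : ℝ} (hT7 : 7 < T) (hT8 : T ≤ 8)
    (hmT : rbar * Real.exp (c/50*(T-7)) = 1/10)
    (hlow : ∀ t ∈ Icc (6:ℝ) 8, ∀ y ∈ Icc (-8:ℝ) 8, rbar ≤ v t y)
    (hub : ∀ t ∈ Icc (7:ℝ) 8, ∀ y ∈ Icc (-4:ℝ) 4, 15/64 ≤ u t y) :
    ∀ t ∈ Icc (7:ℝ) T, ∀ y ∈ Icc (-4:ℝ) 4,
      rbar * Real.exp (c/50*(t-7)) * Real.cos (π/8*y)^2 ≤ v t y := by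
  have hc : (0:ℝ) < c := by linarith
  have hcosCD : ContDiff ℝ 2 (fun w : ℝ => Real.cos (π/8*w)^2) :=
    ((Real.contDiff_cos.of_le le_top).comp (contDiff_const.mul contDiff_id)).pow 2
  set m : ℝ → ℝ := fun t => rbar * Real.exp (c/50*(t-7)) with hm
  have hmpos : ∀ t, 0 < m t := fun t => mul_pos rbar_pos (Real.exp_pos _)
  have hmd : ∀ t : ℝ, HasDerivAt m (c/50 * m t) t := by
    intro t
    have h1 : HasDerivAt (fun τ : ℝ => c/50*(τ-7)) (c/50) t := by
      simpa using ((hasDerivAt_id t).sub_const 7).const_mul (c/50)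
    have h2 := (h1.exp).const_mul rbar
    refine h2.congr_deriv ?_
    simp only [hm]
    ring
  have hmle : ∀ t ∈ Icc (7:ℝ) T, m t ≤ 1/10 := by
    intro t ht
    rw [← hmT]
    apply mul_le_mul_of_nonneg_left _ rbar_pos.le
    apply Real.exp_le_exp.2
    have := ht.2
    nlinarith
  have key := MP2L (a := 7) (b := T) (R := 4) (L := c * (15/64)) hT7 (by norm_num)
    (fun t y => m t * Real.cos (π/8*y)^2 - v t y) ?_ ?_ ?_ ?_ ?_ ?_ ?_
  · intro t ht y hy
    have h := key t ht y hy
    simp only [hm] at h ⊢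
    linarith
  · apply ContinuousOn.sub
    · apply Continuous.continuousOn
      fun_prop
    · exact hsol.cont_v.mono (by intro p hp; exact ⟨le_trans (by linarith) hp.1.1, trivial⟩)
  · intro y hy t ht
    have h7 : (0:ℝ) < t := by linarith [ht.1]
    exact ((hmd t).mul_const _).differentiableAt.sub (vdiff_t hsol y h7)
  · intro t ht
    have h7 : (0:ℝ) < t := by linarith [ht.1]
    exact ((contDiff_const.mul hcosCD).sub (hsol.x_reg_v t h7))
  · intro y hy
    have hv := hlow 7 (by norm_num) y ⟨by linarith [hy.1], by linarith [hy.2]⟩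
    have hco1 : Real.cos (π/8*y)^2 ≤ 1 := by
      have := Real.neg_one_le_cos (π/8*y)
      have := Real.cos_le_one (π/8*y)
      nlinarith
    have hm7 : m 7 = rbar := by simp [hm]
    show m 7 * Real.cos (π/8*y)^2 - v 7 y ≤ 0
    rw [hm7]
    nlinarith [rbar_pos, sq_nonneg (Real.cos (π/8*y))]
  · intro t ht
    have hv0 : 0 ≤ v t (-4) := (hrange t (by linarith [ht.1]) (-4)).1
    have hcos : Real.cos (π/8*(-4)) = 0 := by
      rw [show π/8*(-4) = -(π/2) by ring, Real.cos_neg]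
      exact Real.cos_pi_div_two
    show m t * Real.cos (π/8*(-4))^2 - v t (-4) ≤ 0
    rw [hcos]; simp; linarith
  · intro t ht
    have hv0 : 0 ≤ v t 4 := (hrange t (by linarith [ht.1]) 4).1
    have hcos : Real.cos (π/8*4) = 0 := by
      rw [show π/8*4 = π/2 by ring]
      exact Real.cos_pi_div_two
    show m t * Real.cos (π/8*4)^2 - v t 4 ≤ 0
    rw [hcos]; simp; linarith
  · intro t ht y hy hz
    have h7 : (0:ℝ) < t := by linarith [ht.1]
    have hvd := vdiff_t hsol y h7
    have hd : deriv (fun τ => m τ * Real.cos (π/8*y)^2 - v τ y) t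
        = c/50 * m t * Real.cos (π/8*y)^2 - deriv (fun τ => v τ y) t := by
      rw [deriv_fun_sub ((hmd t).mul_const _).differentiableAt hvd]
      rw [((hmd t).mul_const _).deriv]
    have hsplit : iteratedDeriv 2 (fun w => m t * Real.cos (π/8*w)^2 - v t w) y
        = m t * (2*(π/8)^2*(Real.sin (π/8*y)^2 - Real.cos (π/8*y)^2))
          - iteratedDeriv 2 (v t) y := by
      rw [iter2_sub (contDiff_const.mul hcosCD) (hsol.x_reg_v t h7) y]
      rw [iter2_amp_cos_sq]
    show deriv (fun τ => m τ * Real.cos (π/8*y)^2 - v τ y) t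
        ≤ iteratedDeriv 2 (fun w => m t * Real.cos (π/8*w)^2 - v t w) y
          + c * (15/64) * (m t * Real.cos (π/8*y)^2 - v t y)
    rw [hd, hsplit, hsol.eq_v t h7 y]
    obtain ⟨hv0, hvu, hu1⟩ := hrange t h7.le y
    simp only at hv0 hvu hu1
    have hu15 : 15/64 ≤ u t y := hub t ⟨ht.1.le, le_trans ht.2 hT8⟩ y ⟨hy.1.le, hy.2.le⟩
    set co := Real.cos (π/8*y)^2 with hco
    set si := Real.sin (π/8*y)^2 with hsi
    have hpyth : si + co = 1 := by
      simp only [hco, hsi]; exact Real.sin_sq_add_cos_sq _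
    have hco0 : 0 ≤ co := sq_nonneg _
    have hsi0 : 0 ≤ si := sq_nonneg _
    have hco1 : co ≤ 1 := by linarith
    have hk2 : (π/8)^2 ≤ 1/4 := by
      have := Real.pi_le_four
      have := Real.pi_pos
      nlinarith
    have hk0 : 0 ≤ (π/8)^2 := sq_nonneg _
    have hmt := hmpos t
    have hmle' := hmle t ⟨ht.1.le, ht.2⟩
    have hmco : m t * co ≤ 1/10 := by nlinarith
    have hvmco : v t y < m t * co := by linarith
    -- A : reaction monotonicity in u
    have hA : (c*(15/64 - v t y) - 2) * v t y ≤ (c*(u t y - v t y) - 2) * v t y := by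
      nlinarith [mul_nonneg (mul_nonneg hc.le (by linarith : (0:ℝ) ≤ u t y - 15/64)) hv0]
    -- C : subsolution inequality for the explicit profile
    have hC : c/50 * m t * co
        ≤ m t * (2*(π/8)^2*(si - co)) + (c*(15/64 - m t * co) - 2) * (m t * co) := by
      have hsipos : 0 ≤ m t * (2*(π/8)^2) * si := by positivity
      have hmcoco : 0 ≤ m t * co := by positivity
      have hcoef : c/50 + 2*(1/4) + 2 + c * (1/10) - c*(15/64) ≤ 0 := by nlinarith
      nlinarith [mul_le_mul_of_nonneg_right hk2 hmcoco, mul_nonneg hmcoco hco0,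
        mul_le_mul_of_nonneg_left hmco (mul_nonneg hc.le hmcoco)]
    -- B : quasi-monotone linearization
    have hB : (c*(15/64 - m t * co) - 2) * (m t * co) - (c*(15/64 - v t y) - 2) * v t y
        ≤ c * (15/64) * (m t * co - v t y) := by
      nlinarith [mul_nonneg (by linarith : (0:ℝ) ≤ m t * co - v t y)
        (by positivity : (0:ℝ) ≤ c), mul_nonneg hv0 hc.le]
    linarith [hA, hB, hC]
lemma sqrt_two_le : Real.sqrt 2 ≤ 3/2 := by
  have h := Real.sqrt_le_sqrt (show (2:ℝ) ≤ 9/4 by norm_num)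
  have h94 : Real.sqrt (9/4) = 3/2 := by
    rw [show (9/4:ℝ) = (3/2)^2 by norm_num]
    exact Real.sqrt_sq (by norm_num)
  linarith [h94 ▸ h]

lemma cos_sq_ge_eighth {y : ℝ} (hy : y ∈ Icc (-3:ℝ) 3) :
    (1/8 : ℝ) ≤ Real.cos (π/8*y)^2 := by
  have hpi := Real.pi_pos
  have hpi4 := Real.pi_le_four
  rw [Real.cos_sq]
  have habs : Real.cos (2*(π/8*y)) = Real.cos |2*(π/8*y)| := (Real.cos_abs _).symm
  have harg1 : |2*(π/8*y)| ≤ 3*π/4 := by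
    rw [abs_le]
    constructor <;> nlinarith [hy.1, hy.2]
  have hcosmono : Real.cos (3*π/4) ≤ Real.cos |2*(π/8*y)| := by
    apply Real.cos_le_cos_of_nonneg_of_le_pi (abs_nonneg _) (by nlinarith) harg1
  have hval : Real.cos (3*π/4) = -(Real.sqrt 2 / 2) := by
    rw [show 3*π/4 = π - π/4 by ring, Real.cos_pi_sub, Real.cos_pi_div_four]
  have := sqrt_two_le
  rw [hval] at hcosmono
  rw [← habs] at hcosmono
  linarith

lemma stepC4 {c : ℝ} {u v : ℝ → ℝ → ℝ} (hsol : IsBddSol1 c u v) (hc3 : 3 ≤ c)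
    (hrange : ∀ t, 0 ≤ t → ∀ x, (u t x, v t x) ∈ calR) :
    ∀ t ∈ Icc (0:ℝ) 8, ∀ y : ℝ, v t y ≤ 1 - 2/c*(1 - Real.exp (-t)) := by
  have hc0 : (0:ℝ) < c := by linarith
  set W : ℝ → ℝ := fun t => 1 - 2/c*(1 - Real.exp (-t)) with hW
  have hWd : ∀ t : ℝ, HasDerivAt W (-(2/c) * Real.exp (-t)) t := by
    intro t
    have hexp : HasDerivAt (fun τ : ℝ => Real.exp (-τ)) (-Real.exp (-t)) t := by
      simpa using ((hasDerivAt_id t).neg).exp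
    have h1 := ((hexp.const_sub 1).const_mul (2/c)).const_sub 1
    refine h1.congr_deriv ?_
    ring
  have h2c : 2/c ≤ 2/3 := div_le_div_of_nonneg_left (by norm_num) (by norm_num) hc3
  have h1c : 1/c ≤ 1/3 := div_le_div_of_nonneg_left (by norm_num) (by norm_num) hc3
  have h2cpos : 0 < 2/c := by positivity
  have hWlb : ∀ t : ℝ, 0 ≤ t → 1 - 2/c ≤ W t := by
    intro t ht
    have hE0 : 0 < Real.exp (-t) := Real.exp_pos _
    simp only [hW]
    nlinarith
  have hWub : ∀ t : ℝ, 0 ≤ t → W t ≤ 1 := by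
    intro t ht
    have hE1 : Real.exp (-t) ≤ 1 := Real.exp_le_one_iff.2 (by linarith)
    simp only [hW]
    nlinarith
  have hWcont : Continuous (fun p : ℝ × ℝ => W p.1) := by fun_prop
  clear_value W
  have key := MP1L (b := 8) (C := 1) (L := c) (by norm_num)
    (fun t y => v t y - W t) ?_ ?_ ?_ ?_ ?_ ?_
  · intro t ht y
    have h := key t ht y
    simp only [hW] at h ⊢
    linarith
  · apply ContinuousOn.sub
    · exact hsol.cont_v.mono (by intro p hp; exact ⟨hp.1.1, trivial⟩)
    · exact hWcont.continuousOn
  · intro t ht y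
    obtain ⟨hv0, hvu, hu1⟩ := hrange t ht.1 y
    simp only at hv0 hvu hu1
    have hq := hWlb t ht.1
    have h0W : (0:ℝ) ≤ W t := le_trans (show (0:ℝ) ≤ 1 - 2/c by linarith) hq
    show v t y - W t ≤ 1
    linarith
  · intro y t ht
    exact (vdiff_t hsol y ht.1).sub (hWd t).differentiableAt
  · intro t ht
    exact (hsol.x_reg_v t ht.1).sub contDiff_const
  · intro y
    show v 0 y - W 0 ≤ 0
    have hW0 : W 0 = 1 := by simp [hW]
    obtain ⟨hv0, hvu, hu1⟩ := hrange 0 le_rfl y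
    simp only at hv0 hvu hu1
    rw [hW0]
    linarith
  · intro t ht y hz
    have hvd := vdiff_t hsol y ht.1
    have hd : deriv (fun τ => v τ y - W τ) t
        = deriv (fun τ => v τ y) t - (-(2/c) * Real.exp (-t)) := by
      rw [deriv_fun_sub hvd (hWd t).differentiableAt, (hWd t).deriv]
    have hsplit : iteratedDeriv 2 (fun w => v t w - W t) y
        = iteratedDeriv 2 (v t) y - 0 := by
      rw [iter2_sub (hsol.x_reg_v t ht.1) contDiff_const y, iter2_const]
    show deriv (fun τ => v τ y - W τ) t
        ≤ iteratedDeriv 2 (fun w => v t w - W t) y + c * (v t y - W t)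
    rw [hd, hsplit, hsol.eq_v t ht.1 y]
    obtain ⟨hv0, hvu, hu1⟩ := hrange t ht.1.le y
    simp only at hv0 hvu hu1
    set E := Real.exp (-t) with hE
    have hE0 : 0 < E := Real.exp_pos _
    have hE1 : E ≤ 1 := Real.exp_le_one_iff.2 (by linarith [ht.1])
    have hvW : W t < v t y := by linarith
    have hWc : c * (1 - W t) = 2*(1-E) := by
      simp only [hW]
      field_simp
      rw [hE]; ring
    have hWlb' := hWlb t ht.1.le
    have hW1c : 1/c ≤ W t := by linarith
    -- p1 : reaction bound via u ≤ 1
    have p1 : (c*(u t y - v t y) - 2) * v t y ≤ (c*(1 - v t y) - 2) * v t y := by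
      nlinarith [mul_nonneg (mul_nonneg hc0.le (by linarith : (0:ℝ) ≤ 1 - u t y)) hv0]
    -- p2 : (2/c) E ≤ 2 E W
    have p2 : 2/c * E ≤ 2 * E * W t := by
      have h := mul_le_mul_of_nonneg_left hW1c (by linarith : (0:ℝ) ≤ 2 * E)
      calc 2/c * E = 2 * E * (1/c) := by ring
        _ ≤ 2 * E * W t := h
    -- p3 : quasimonotonicity
    have p3 : (c*(1 - v t y) - 2) * v t y - (c*(1 - W t) - 2) * W t ≤ c * (v t y - W t) := by
      have h1 : 0 ≤ v t y - W t := by linarith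
      have h2 : 0 ≤ c * (v t y + W t) + 2 := by nlinarith
      nlinarith [mul_nonneg h1 h2]
    have hg1W : (c*(1 - W t) - 2) * W t = -2*E*(W t) := by
      rw [hWc]; ring
    linarith [p1, p2, p3, hg1W,
      (rfl : iteratedDeriv 2 (fun w => v t w) y = iteratedDeriv 2 (v t) y)]
lemma rbar_small : 10 * rbar < 1 := by
  unfold rbar
  have h : Real.exp (-19) < 1 := Real.exp_lt_one_iff.2 (by norm_num)
  linarith

/-- Condition (*): for all sufficiently large `c` there exist
`0 < D₁ < d₁ < d₂ < D₂ < 1`, `M > 0` and `T > 0` such that every `ℛ`-valued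
bounded classical solution with `v(0,x) ∈ (D₁,D₂)` on `[−M,M]` satisfies
`v(T,x) ∈ (d₁,d₂)` on `[−3M,3M]`. -/
theorem stmt14 :
    ∃ c₀ : ℝ, ∀ c : ℝ, c₀ ≤ c →
      ∃ D₁ d₁ d₂ D₂ M T : ℝ,
        0 < D₁ ∧ D₁ < d₁ ∧ d₁ < d₂ ∧ d₂ < D₂ ∧ D₂ < 1 ∧ 0 < M ∧ 0 < T ∧
        ∀ u v : ℝ → ℝ → ℝ, IsBddSol1 c u v →
          (∀ t, 0 ≤ t → ∀ x, (u t x, v t x) ∈ calR) →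
          (∀ x ∈ Icc (-M) M, v 0 x ∈ Ioo D₁ D₂) →
          ∀ x ∈ Icc (-(3 * M)) (3 * M), v T x ∈ Ioo d₁ d₂ := by
  have hrb := rbar_pos
  have hlog : 0 < Real.log (1/(10*rbar)) := by
    apply Real.log_pos
    rw [lt_div_iff₀ (by linarith)]
    linarith [rbar_small]
  refine ⟨60 + 4/rbar + 50*Real.log (1/(10*rbar)), fun c hc => ?_⟩
  have hc60 : 60 ≤ c := by
    have h1 : 0 < 4/rbar := by positivity
    linarith
  have hc0 : (0:ℝ) < c := by linarith
  have hc4 : 4 ≤ c * rbar := by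
    rw [← div_le_iff₀ hrb]
    have h1 : 0 < 4/rbar := by positivity
    linarith
  have hc3 : (3:ℝ) ≤ c := by linarith
  have hclog : 50*Real.log (1/(10*rbar)) ≤ c := by
    have h1 : 0 < 4/rbar := by positivity
    linarith
  set T : ℝ := 7 + 50/c * Real.log (1/(10*rbar)) with hT
  clear_value T
  have hT7 : 7 < T := by
    have h0 : 0 < 50/c * Real.log (1/(10*rbar)) := by positivity
    linarith [hT, h0]
  have hT8 : T ≤ 8 := by
    have h1 : 50/c * Real.log (1/(10*rbar)) = (50*Real.log (1/(10*rbar)))/c := by ring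
    have h2 : (50*Real.log (1/(10*rbar)))/c ≤ 1 := by
      rw [div_le_one hc0]
      exact hclog
    simp only [hT]
    linarith
  have hT0 : 0 < T := by linarith
  have hmT : rbar * Real.exp (c/50*(T-7)) = 1/10 := by
    have harg : c/50*(T-7) = Real.log (1/(10*rbar)) := by
      simp only [hT]
      field_simp
      ring
    rw [harg, Real.exp_log (by positivity)]
    field_simp
  have hET : Real.exp (-T) < 1 := by
    rw [Real.exp_lt_one_iff]
    linarith
  have hET0 : 0 < Real.exp (-T) := Real.exp_pos _
  set q : ℝ := 1 - Real.exp (-T) with hq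
  clear_value q
  have hq0 : 0 < q := by simp only [hq]; linarith
  have hq1 : q ≤ 1 := by simp only [hq]; linarith
  have hqc : 0 < q/c := by positivity
  refine ⟨1/1000, 1/100, 1 - q/c, 1 - q/(2*c), 1, T, by norm_num, by norm_num, ?_, ?_, ?_,
    by norm_num, hT0, ?_⟩
  · -- 1/100 < 1 - q/c
    have h1 : q/c ≤ 1/60 := by
      rw [div_le_div_iff₀ hc0 (by norm_num)]
      linarith
    linarith
  · -- 1 - q/c < 1 - q/(2c)
    have h1 : q/(2*c) < q/c := by
      apply div_lt_div_of_pos_left hq0 (by linarith) (by linarith)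
    linarith
  · -- 1 - q/(2c) < 1
    have h1 : 0 < q/(2*c) := by positivity
    linarith
  · intro u v hsol hrange hinit x hx
    have hinit' : ∀ x ∈ Icc (-1:ℝ) 1, 1/1000 < v 0 x := by
      intro y hy
      exact (hinit y hy).1
    have hlow := stepCor1 hsol hc0 hrange hinit'
    have hub := stepCor2 hsol hc0 hc4 hrange hlow
    have hC3 := stepC3 hsol hc60 hrange hT7 hT8 hmT hlow hub
    have hx3 : x ∈ Icc (-3:ℝ) 3 := by
      constructor <;> [linarith [hx.1]; linarith [hx.2]]
    have hlower := hC3 T ⟨hT7.le, le_rfl⟩ x ⟨by linarith [hx3.1], by linarith [hx3.2]⟩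
    rw [hmT] at hlower
    have hcos := cos_sq_ge_eighth hx3
    have hlower' : (1/80 : ℝ) ≤ v T x := by
      have h1 : (1/10 : ℝ) * (1/8) ≤ 1/10 * Real.cos (π/8*x)^2 := by linarith
      linarith
    have hupper := stepC4 hsol hc3 hrange T ⟨hT0.le, hT8⟩ x
    constructor
    · linarith
    · -- v T x < 1 - q/c
      have hEq : 2/c*(1-Real.exp (-T)) = 2*((1-Real.exp (-T))/c) := by ring
      have hq' : q/c = (1-Real.exp (-T))/c := by rw [hq]
      have hqc' : 0 < (1-Real.exp (-T))/c := by rw [← hq']; exact hqc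
      rw [hq']
      linarith [hupper, hEq, hqc']
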